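/- Let h ∈ (θ, ∞) be the unique zero of P. Then for any reals s_*, s^* with θ < s_* < h < s^*, there exists a positive integer N₀ such that for every integer n > N₀ one has ∏_{i=1}^m (∑_{j=1}^∞ γ_{ij}^{s^*})^{N_i(n)} < 1 < ∏_{i=1}^m (∑_{j=1}^∞ γ_{ij}^{s_*})^{N_i(n)}; equivalently, ∑_{σ∈ℕ^n} c_σ^{s^*} < 1 < ∑_{σ∈ℕ^n} c_σ^{s_*}. -/

import Mathlib

set_option maxHeartbeats 1000000


open Real Filter

/-- Product of tsums over a Pi type indexed by `Fin n`. -/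
lemma tsum_pi_prod : ∀ (n : ℕ) (f : Fin n → ℕ → ℝ), (∀ k j, 0 ≤ f k j) →
    (∀ k, Summable (f k)) →
    Summable (fun σ : Fin n → ℕ => ∏ k, f k (σ k)) ∧
      (∑' σ : Fin n → ℕ, ∏ k, f k (σ k)) = ∏ k, ∑' j, f k j := by
  intro n
  induction n with
  | zero =>
    intro f _ _
    have h1 : ∀ σ : Fin 0 → ℕ, (∏ k, f k (σ k)) = 1 := fun σ => by simp
    constructor
    · have : (fun σ : Fin 0 → ℕ => ∏ k, f k (σ k)) = fun _ => 1 := funext h1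
      rw [this]; exact summable_of_finite_support (Set.toFinite _)
    · rw [tsum_congr h1,
        tsum_eq_single (default : Fin 0 → ℕ)
          (fun b hb => absurd (Subsingleton.elim b default) hb)]
      simp
  | succ n ih =>
    intro f h0 hs
    obtain ⟨ihs, ihe⟩ := ih (fun k => f k.succ) (fun k j => h0 _ _) (fun k => hs _)
    set G : ℕ × (Fin n → ℕ) → ℝ := fun p => f 0 p.1 * ∏ k, f (Fin.succ k) (p.2 k) with hG
    have hGs : Summable G :=
      Summable.mul_of_nonneg (f := f 0)
        (g := fun σ : Fin n → ℕ => ∏ k, f (Fin.succ k) (σ k))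
        (hs 0) ihs (fun j => h0 0 j)
        (fun σ => Finset.prod_nonneg fun k _ => h0 _ _)
    have key : ∀ p : ℕ × (Fin n → ℕ),
        (∏ k, f k ((Fin.consEquiv (fun _ => ℕ)) p k)) = G p := by
      intro p
      rw [Fin.prod_univ_succ]
      simp [Fin.consEquiv, hG]
    constructor
    · have hGse : Summable (fun p : ℕ × (Fin n → ℕ) =>
          ∏ k, f k ((Fin.consEquiv (fun _ => ℕ)) p k)) := by
        rw [funext key]; exact hGs
      exact (Equiv.summable_iff (Fin.consEquiv (fun _ => ℕ))).mp hGse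
    · calc (∑' σ : Fin (n+1) → ℕ, ∏ k, f k (σ k))
          = ∑' p : ℕ × (Fin n → ℕ), ∏ k, f k ((Fin.consEquiv (fun _ => ℕ)) p k) :=
            ((Fin.consEquiv (fun _ => ℕ)).tsum_eq _).symm
        _ = ∑' p : ℕ × (Fin n → ℕ), G p := tsum_congr key
        _ = (∑' j, f 0 j) * (∑' σ : Fin n → ℕ, ∏ k, f (Fin.succ k) (σ k)) :=
            (Summable.tsum_mul_tsum (hs 0) ihs hGs).symm
        _ = ∏ k, ∑' j, f k j := by rw [ihe, Fin.prod_univ_succ]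

/-- Grouping a product over `Fin n` by the values of `ω`. -/
lemma prod_comp_eq_prod_pow {m n : ℕ} (ω : ℕ → Fin m) (F : Fin m → ℝ) :
    (∏ k : Fin n, F (ω k)) =
      ∏ i : Fin m, F i ^ (((Finset.range n).filter (fun k => ω k = i)).card) := by
  calc (∏ k : Fin n, F (ω ↑k)) = ∏ k ∈ Finset.range n, F (ω k) :=
        Fin.prod_univ_eq_prod_range (fun k => F (ω k)) n
    _ = ∏ i : Fin m, ∏ _k ∈ (Finset.range n).filter (fun k => ω k = i), F i :=
        (Finset.prod_fiberwise_of_maps_to' (fun k _ => Finset.mem_univ (ω k)) F).symm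
    _ = _ := Finset.prod_congr rfl fun i _ => Finset.prod_const (F i)

/-- If `h ∈ (θ, ∞)` is the (unique) zero of the pressure `P`, then for any
`s_* , s^*` with `θ < s_* < h < s^*` there is a positive integer `N₀` such that for all
`n > N₀`: `∏ᵢ (∑ⱼ γᵢⱼ^{s^*})^{Nᵢ(n)} < 1 < ∏ᵢ (∑ⱼ γᵢⱼ^{s_*})^{Nᵢ(n)}`, equivalently
`∑_{σ ∈ ℕⁿ} c_σ^{s^*} < 1 < ∑_{σ ∈ ℕⁿ} c_σ^{s_*}`. -/
theorem pressure_zero_partition_sums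
    (m : ℕ) (hm : 1 ≤ m) (γ : Fin m → ℕ → ℝ)
    (hγpos : ∀ i j, 0 < γ i j)
    (hγsum : ∀ i, Summable (fun j => γ i j))
    (hγsup : ∃ C : ℝ, C < 1 ∧ ∀ i j, γ i j ≤ C)
    (θ : ℝ)
    (hθ : θ = ⨆ i : Fin m, sInf {t : ℝ | 0 < t ∧ Summable (fun j => γ i j ^ t)})
    (η : Fin m → ℝ) (hηpos : ∀ i, 0 < η i) (hηsum : ∑ i, η i = 1)
    (P : ℝ → ℝ)
    (hP : ∀ t : ℝ, P t = ∑ i, η i * Real.log (∑' j, γ i j ^ t))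
    (hu : ∃ u ∈ Set.Ioi θ, 0 < P u)
    (ω : ℕ → Fin m)
    (hfreq : ∀ i, Tendsto
      (fun n => (((Finset.range n).filter (fun k => ω k = i)).card : ℝ) / n)
      atTop (nhds (η i)))
    (h : ℝ) (hh : h ∈ Set.Ioi θ ∧ P h = 0)
    (sstar shigh : ℝ) (h1 : θ < sstar) (h2 : sstar < h) (h3 : h < shigh) :
    ∃ N₀ : ℕ, 0 < N₀ ∧ ∀ n : ℕ, N₀ < n →
      ((∏ i : Fin m, (∑' j, γ i j ^ shigh) ^ (((Finset.range n).filter (fun k => ω k = i)).card)) < 1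
        ∧ 1 < ∏ i : Fin m, (∑' j, γ i j ^ sstar) ^ (((Finset.range n).filter (fun k => ω k = i)).card))
      ∧ ((∑' σ : Fin n → ℕ, (∏ k : Fin n, γ (ω k) (σ k)) ^ shigh) < 1
        ∧ 1 < ∑' σ : Fin n → ℕ, (∏ k : Fin n, γ (ω k) (σ k)) ^ sstar) := by
  obtain ⟨C, hC1, hCle⟩ := hγsup
  haveI hmne : Nonempty (Fin m) := ⟨⟨0, hm⟩⟩
  have hγlt1 : ∀ i j, γ i j < 1 := fun i j => lt_of_le_of_lt (hCle i j) hC1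
  set S : Fin m → Set ℝ := fun i => {t : ℝ | 0 < t ∧ Summable (fun j => γ i j ^ t)} with hSdef
  have hone : ∀ i, (1:ℝ) ∈ S i := fun i =>
    ⟨one_pos, by simpa [Real.rpow_one] using hγsum i⟩
  have hθi_le : ∀ i, sInf (S i) ≤ θ := by
    intro i; rw [hθ]
    exact le_ciSup (Set.Finite.bddAbove (Set.finite_range (fun i => sInf (S i)))) i
  -- summability above θ
  have hsummable : ∀ (t : ℝ), θ < t → ∀ i, Summable (fun j => γ i j ^ t) := by
    intro t ht i
    obtain ⟨s, hsS, hst⟩ :=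
      exists_lt_of_csInf_lt ⟨1, hone i⟩ (lt_of_le_of_lt (hθi_le i) ht)
    refine Summable.of_nonneg_of_le
      (fun j => Real.rpow_nonneg (hγpos i j).le t) (fun j => ?_) hsS.2
    have heq : γ i j ^ t = γ i j ^ s * γ i j ^ (t - s) := by
      rw [← Real.rpow_add (hγpos i j)]; ring_nf
    rw [heq]
    have hle1 : γ i j ^ (t - s) ≤ 1 :=
      Real.rpow_le_one (hγpos i j).le (hγlt1 i j).le (by linarith)
    calc γ i j ^ s * γ i j ^ (t - s) ≤ γ i j ^ s * 1 :=
          mul_le_mul_of_nonneg_left hle1 (Real.rpow_nonneg (hγpos i j).le s)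
      _ = γ i j ^ s := mul_one _
  have hSpos : ∀ (t : ℝ), θ < t → ∀ i, 0 < ∑' j, γ i j ^ t := fun t ht i =>
    Summable.tsum_pos (hsummable t ht i) (fun j => Real.rpow_nonneg (hγpos i j).le t) 0
      (Real.rpow_pos_of_pos (hγpos i 0) t)
  -- P is strictly decreasing on (θ, ∞)
  have hPanti : ∀ t1 t2 : ℝ, θ < t1 → t1 < t2 → P t2 < P t1 := by
    intro t1 t2 ht1 ht12
    have ht2 : θ < t2 := ht1.trans ht12
    rw [hP t1, hP t2]
    refine Finset.sum_lt_sum_of_nonempty Finset.univ_nonempty (fun i _ => ?_)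
    refine mul_lt_mul_of_pos_left ?_ (hηpos i)
    refine Real.log_lt_log (hSpos t2 ht2 i) ?_
    refine Summable.tsum_lt_tsum (f := fun j => γ i j ^ t2) (g := fun j => γ i j ^ t1) (i := 0)
      (fun j => (Real.rpow_lt_rpow_of_exponent_gt (hγpos i j) (hγlt1 i j) ht12).le)
      (Real.rpow_lt_rpow_of_exponent_gt (hγpos i 0) (hγlt1 i 0) ht12)
      (hsummable t2 ht2 i) (hsummable t1 ht1 i)
  have hPs : 0 < P sstar := by
    have := hPanti sstar h h1 h2; rw [hh.2] at this; exact this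
  have hPh : P shigh < 0 := by
    have := hPanti h shigh hh.1 h3; rw [hh.2] at this; exact this
  have hθsh : θ < shigh := h1.trans (h2.trans h3)
  -- the normalized log sums tend to P t
  have hLtend : ∀ t : ℝ, Tendsto (fun n : ℕ => ∑ i,
      ((((Finset.range n).filter (fun k => ω k = i)).card : ℝ) / n) *
        Real.log (∑' j, γ i j ^ t)) atTop (nhds (P t)) := by
    intro t
    rw [hP t]
    exact tendsto_finset_sum _ (fun i _ => (hfreq i).mul_const _)
  obtain ⟨N1, hN1⟩ := ((hLtend sstar).eventually_const_lt hPs).exists_forall_of_atTop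
  obtain ⟨N2, hN2⟩ := ((hLtend shigh).eventually_lt_const hPh).exists_forall_of_atTop
  refine ⟨max (max N1 N2) 1, lt_of_lt_of_le one_pos (le_max_right _ _), ?_⟩
  intro n hn
  have hnN1 : N1 ≤ n := le_of_lt (lt_of_le_of_lt ((le_max_left N1 N2).trans (le_max_left _ _)) hn)
  have hnN2 : N2 ≤ n := le_of_lt (lt_of_le_of_lt ((le_max_right N1 N2).trans (le_max_left _ _)) hn)
  have hn0 : (0:ℝ) < n := by
    have : 1 ≤ n := le_of_lt (lt_of_le_of_lt (le_max_right _ _) hn)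
    exact_mod_cast this
  -- log of the products
  have hlog : ∀ t : ℝ, θ < t →
      Real.log (∏ i : Fin m, (∑' j, γ i j ^ t) ^
        (((Finset.range n).filter (fun k => ω k = i)).card)) =
      (n : ℝ) * ∑ i, ((((Finset.range n).filter (fun k => ω k = i)).card : ℝ) / n) *
        Real.log (∑' j, γ i j ^ t) := by
    intro t ht
    rw [Real.log_prod (fun i _ => pow_ne_zero _ (ne_of_gt (hSpos t ht i))),
      Finset.mul_sum]
    refine Finset.sum_congr rfl fun i _ => ?_
    rw [Real.log_pow]
    field_simp
  have hprodpos : ∀ t : ℝ, θ < t →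
      0 < ∏ i : Fin m, (∑' j, γ i j ^ t) ^
        (((Finset.range n).filter (fun k => ω k = i)).card) := fun t ht =>
    Finset.prod_pos (fun i _ => pow_pos (hSpos t ht i) _)
  have hlt1 : (∏ i : Fin m, (∑' j, γ i j ^ shigh) ^
      (((Finset.range n).filter (fun k => ω k = i)).card)) < 1 := by
    rw [← Real.log_neg_iff (hprodpos shigh hθsh), hlog shigh hθsh]
    exact mul_neg_of_pos_of_neg hn0 (hN2 n hnN2)
  have hgt1 : 1 < ∏ i : Fin m, (∑' j, γ i j ^ sstar) ^
      (((Finset.range n).filter (fun k => ω k = i)).card) := by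
    rw [← Real.log_pos_iff (hprodpos sstar h1).le, hlog sstar h1]
    exact mul_pos hn0 (hN1 n hnN1)
  -- rewrite the tsum over words
  have htsum : ∀ t : ℝ, θ < t →
      (∑' σ : Fin n → ℕ, (∏ k : Fin n, γ (ω k) (σ k)) ^ t) =
      ∏ i : Fin m, (∑' j, γ i j ^ t) ^
        (((Finset.range n).filter (fun k => ω k = i)).card) := by
    intro t ht
    have hre : ∀ σ : Fin n → ℕ,
        (∏ k : Fin n, γ (ω k) (σ k)) ^ t = ∏ k : Fin n, γ (ω k) (σ k) ^ t :=
      fun σ => (Real.finset_prod_rpow _ _ (fun k _ => (hγpos _ _).le) t).symm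
    rw [tsum_congr hre,
      (tsum_pi_prod n (fun k j => γ (ω k) j ^ t)
        (fun k j => Real.rpow_nonneg (hγpos _ _).le t)
        (fun k => hsummable t ht _)).2,
      prod_comp_eq_prod_pow ω (fun i => ∑' j, γ i j ^ t)]
  refine ⟨⟨hlt1, hgt1⟩, ?_, ?_⟩
  · rw [htsum shigh hθsh]; exact hlt1
  · rw [htsum sstar h1]; exact hgt1
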